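/- arXiv:2003.08411 — 9 statements merged into one kernel-verified Lean document; each statement's English description precedes it below -/
import Mathlib

section
/- Let H be an n × n Hermitian matrix with all eigenvalues in [c₂, c₁] and let τ > 0 satisfy c₁ ≤ 1/τ and c₂ ≤ 1/τ. Then log n − S(ρ_H^τ) ≤ τ(c₁ − c₂). -/
open Real Finset

/-- Gibbs-state entropy in terms of the eigenvalues `lam`:
`S(ρ_H^τ) = τ·(Σ_i λ_i e^{-τλ_i})/(Σ_i e^{-τλ_i}) + log(Σ_i e^{-τλ_i})`. -/
noncomputable def gibbsEntropy {m : Type*} [Fintype m] (τ : ℝ) (lam : m → ℝ) : ℝ :=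
  τ * (∑ i, lam i * Real.exp (-τ * lam i)) / (∑ i, Real.exp (-τ * lam i)) +
    Real.log (∑ i, Real.exp (-τ * lam i))

theorem gibbs_entropy_bound_small_tau (n : ℕ) (hn : 0 < n)
    (H : Matrix (Fin n) (Fin n) ℂ) (hH : H.IsHermitian)
    (c₁ c₂ τ : ℝ) (hτ : 0 < τ)
    (hbound : ∀ i, c₂ ≤ hH.eigenvalues i ∧ hH.eigenvalues i ≤ c₁)
    (h1 : c₁ ≤ 1 / τ) (h2 : c₂ ≤ 1 / τ) :
    Real.log n - gibbsEntropy τ hH.eigenvalues ≤ τ * (c₁ - c₂) := by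
  set lam := hH.eigenvalues with hlam
  set Z : ℝ := ∑ i, Real.exp (-τ * lam i) with hZdef
  have hZpos : 0 < Z := Finset.sum_pos (fun i _ => Real.exp_pos _)
    (Finset.univ_nonempty_iff.mpr ⟨⟨0, hn⟩⟩)
  have hA : c₂ * Z ≤ ∑ i, lam i * Real.exp (-τ * lam i) := by
    rw [hZdef, Finset.mul_sum]
    exact Finset.sum_le_sum fun i _ =>
      mul_le_mul_of_nonneg_right (hbound i).1 (Real.exp_pos _).le
  have hfrac : τ * c₂ ≤ τ * (∑ i, lam i * Real.exp (-τ * lam i)) / Z := by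
    rw [le_div_iff₀ hZpos]
    calc τ * c₂ * Z = τ * (c₂ * Z) := by ring
    _ ≤ τ * (∑ i, lam i * Real.exp (-τ * lam i)) :=
      mul_le_mul_of_nonneg_left hA hτ.le
  have hlog : Real.log n - τ * c₁ ≤ Real.log Z := by
    have hZn : (n : ℝ) * Real.exp (-τ * c₁) ≤ Z := by
      rw [hZdef]
      calc (n : ℝ) * Real.exp (-τ * c₁)
          = ∑ _i : Fin n, Real.exp (-τ * c₁) := by
            simp [Finset.sum_const, Finset.card_univ]
        _ ≤ ∑ i, Real.exp (-τ * lam i) :=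
            Finset.sum_le_sum fun i _ => Real.exp_le_exp.mpr (by
              have := (hbound i).2; nlinarith)
    have hnpos : (0:ℝ) < (n : ℝ) := by exact_mod_cast hn
    have := Real.log_le_log (by positivity) hZn
    rw [Real.log_mul hnpos.ne' (Real.exp_pos _).ne', Real.log_exp] at this
    linarith
  simp only [gibbsEntropy]
  have : τ * c₂ + (Real.log n - τ * c₁) ≤
      τ * (∑ i, lam i * Real.exp (-τ * lam i)) / Z + Real.log Z :=
    add_le_add hfrac hlog
  linarith
end

section
/- Let H be an n × n Hermitian matrix with all eigenvalues in [c₂, c₁] and let τ > 0 satisfy 1/τ ≤ c₂ ≤ c₁. Then log n − S(ρ_H^τ) ≤ τ·c₁·(1 − exp(τ(c₂ − c₁))). -/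
open Real Finset

theorem gibbs_entropy_bound_large_tau (n : ℕ) (hn : 0 < n)
    (H : Matrix (Fin n) (Fin n) ℂ) (hH : H.IsHermitian)
    (c₁ c₂ τ : ℝ) (hτ : 0 < τ)
    (hbound : ∀ i, c₂ ≤ hH.eigenvalues i ∧ hH.eigenvalues i ≤ c₁)
    (h1 : 1 / τ ≤ c₂) (h2 : c₂ ≤ c₁) :
    Real.log n - gibbsEntropy τ hH.eigenvalues ≤
      τ * c₁ * (1 - Real.exp (τ * (c₂ - c₁))) := by
  have hc2 : 0 < c₂ := lt_of_lt_of_le (by positivity) h1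
  have hτc2 : 1 ≤ τ * c₂ := by
    rw [div_le_iff₀ hτ] at h1; linarith
  set lam := hH.eigenvalues with hlam
  set Z := ∑ i, Real.exp (-τ * lam i) with hZ
  set A := ∑ i, lam i * Real.exp (-τ * lam i) with hA
  have hZpos : 0 < Z := Finset.sum_pos (fun i _ => Real.exp_pos _) ⟨⟨0, hn⟩, Finset.mem_univ _⟩
  have hZlb : (n : ℝ) * Real.exp (-τ * c₁) ≤ Z := by
    rw [hZ]
    calc (n : ℝ) * Real.exp (-τ * c₁) = ∑ _i : Fin n, Real.exp (-τ * c₁) := by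
          simp [mul_comm]
      _ ≤ _ := Finset.sum_le_sum fun i _ =>
          Real.exp_le_exp.mpr (by nlinarith [(hbound i).2])
  have hAlb : c₂ * Z ≤ A := by
    rw [hZ, hA, Finset.mul_sum]
    exact Finset.sum_le_sum fun i _ =>
      mul_le_mul_of_nonneg_right (hbound i).1 (Real.exp_pos _).le
  have hlogZ : Real.log n - τ * c₁ ≤ Real.log Z := by
    have := Real.log_le_log (by positivity) hZlb
    rw [Real.log_mul (by positivity) (Real.exp_ne_zero _), Real.log_exp] at this
    linarith
  have hterm : τ * c₂ ≤ τ * A / Z := by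
    rw [le_div_iff₀ hZpos]
    nlinarith
  have hS : τ * (c₁ - c₂) ≤ τ * c₁ * (1 - Real.exp (τ * (c₂ - c₁))) := by
    have hx : 0 ≤ τ * (c₁ - c₂) := by nlinarith
    have he : τ * (c₁ - c₂) + 1 ≤ Real.exp (τ * (c₁ - c₂)) := Real.add_one_le_exp _
    have hme : Real.exp (τ * (c₂ - c₁)) * Real.exp (τ * (c₁ - c₂)) = 1 := by
      rw [← Real.exp_add]; ring_nf; exact Real.exp_zero
    have hep : 0 < Real.exp (τ * (c₂ - c₁)) := Real.exp_pos _
    have hele : Real.exp (τ * (c₂ - c₁)) ≤ 1 := by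
      rw [Real.exp_le_one_iff]; nlinarith
    nlinarith [mul_le_mul_of_nonneg_left he hep.le]
  have hdef : gibbsEntropy τ hH.eigenvalues = τ * A / Z + Real.log Z := rfl
  rw [hdef]
  nlinarith
end

section
/- Let H be an n × n Hermitian matrix with all eigenvalues in [c₂, c₁] and let τ > 0 satisfy c₂ ≤ 1/τ ≤ c₁. Then log n − S(ρ_H^τ) ≤ τ·(c₁ − min{c₁·exp(τ(c₂ − c₁)), c₂}). -/
open Real Finset

theorem gibbs_entropy_bound_middle_tau (n : ℕ) (hn : 0 < n)
    (H : Matrix (Fin n) (Fin n) ℂ) (hH : H.IsHermitian)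
    (c₁ c₂ τ : ℝ) (hτ : 0 < τ)
    (hbound : ∀ i, c₂ ≤ hH.eigenvalues i ∧ hH.eigenvalues i ≤ c₁)
    (h1 : c₂ ≤ 1 / τ) (h2 : 1 / τ ≤ c₁) :
    Real.log n - gibbsEntropy τ hH.eigenvalues ≤
      τ * (c₁ - min (c₁ * Real.exp (τ * (c₂ - c₁))) c₂) := by
  have hne : Nonempty (Fin n) := ⟨⟨0, hn⟩⟩
  set lam := hH.eigenvalues with hlam
  set B := ∑ i, Real.exp (-τ * lam i) with hB
  set A := ∑ i, lam i * Real.exp (-τ * lam i) with hA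
  have hBpos : 0 < B := Finset.sum_pos (fun i _ => Real.exp_pos _)
    (Finset.univ_nonempty)
  set m := min (c₁ * Real.exp (τ * (c₂ - c₁))) c₂ with hm
  have hmc : m ≤ c₂ := min_le_right _ _
  have hAB : m * B ≤ A := by
    rw [hB, hA, Finset.mul_sum]
    apply Finset.sum_le_sum
    intro i _
    exact mul_le_mul_of_nonneg_right (le_trans hmc (hbound i).1) (Real.exp_pos _).le
  have hBlb : (n : ℝ) * Real.exp (-τ * c₁) ≤ B := by
    rw [hB]
    calc (n : ℝ) * Real.exp (-τ * c₁) = ∑ _i : Fin n, Real.exp (-τ * c₁) := by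
          simp [mul_comm]
      _ ≤ _ := Finset.sum_le_sum fun i _ => Real.exp_le_exp.2 (by nlinarith [(hbound i).2])
  have hnpos : (0 : ℝ) < n := by exact_mod_cast hn
  have hlog : Real.log n - Real.log B ≤ τ * c₁ := by
    have hl : Real.log ((n : ℝ) * Real.exp (-τ * c₁)) ≤ Real.log B :=
      Real.log_le_log (by positivity) hBlb
    rw [Real.log_mul (ne_of_gt hnpos) (Real.exp_ne_zero _), Real.log_exp] at hl
    linarith
  have hdiv : τ * m ≤ τ * A / B := by
    rw [le_div_iff₀ hBpos]
    nlinarith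
  unfold gibbsEntropy
  rw [← hA, ← hB]
  nlinarith
end

section
/- Let (H_n) be a sequence of singular positive semidefinite n × n Hermitian matrices, each with exactly one zero eigenvalue, and let τ > 0 be fixed. If the smallest nonzero eigenvalue satisfies λ_{n-1}(H_n)/log n → ∞ as n → ∞, then S(ρ_{H_n}^τ) → 0. -/
open Real Finset Filter ComplexOrder

private lemma two_mul_le_exp' {s : ℝ} (hs : 0 ≤ s) : 2 * s ≤ Real.exp s := by
  have h := Real.add_one_le_exp (s/2)
  have h2 : Real.exp s = Real.exp (s/2) * Real.exp (s/2) := by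
    rw [← Real.exp_add]; ring_nf
  have h3 : (s/2+1)*(s/2+1) ≤ Real.exp (s/2) * Real.exp (s/2) :=
    mul_le_mul (by linarith) (by linarith) (by linarith) (Real.exp_pos _).le
  nlinarith [sq_nonneg (s/2 - 1)]

private lemma mul_exp_le' {τ x : ℝ} (hτ : 0 < τ) (hx : 0 ≤ x) :
    x * Real.exp (-τ * x) ≤ (1/τ) * Real.exp (-(τ/2) * x) := by
  have key : 2 * (τ/2 * x) ≤ Real.exp (τ/2 * x) :=
    two_mul_le_exp' (mul_nonneg (half_pos hτ).le hx)
  have hA := Real.exp_pos (-(τ/2)*x)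
  have hAB : Real.exp (-(τ/2)*x) * Real.exp (τ/2*x) = 1 := by
    rw [← Real.exp_add]; ring_nf; exact Real.exp_zero
  have e1 : Real.exp (-τ*x) = Real.exp (-(τ/2)*x) * Real.exp (-(τ/2)*x) := by
    rw [← Real.exp_add]; ring_nf
  rw [e1]
  have h1 : τ * x * Real.exp (-(τ/2)*x) ≤ 1 := by
    calc τ * x * Real.exp (-(τ/2)*x) ≤ Real.exp (τ/2*x) * Real.exp (-(τ/2)*x) := by
          apply mul_le_mul_of_nonneg_right _ hA.le; linarith
      _ = 1 := by rw [mul_comm]; exact hAB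
  rw [div_mul_eq_mul_div, le_div_iff₀ hτ]
  nlinarith [hA.le]

private lemma tendsto_n_mul_exp' {c : ℝ} (hc : 0 < c) {lmin : ℕ → ℝ}
    (hgg : Tendsto (fun n : ℕ => lmin n / Real.log n) atTop atTop) :
    Tendsto (fun n : ℕ => (n : ℝ) * Real.exp (-c * lmin n)) atTop (nhds 0) := by
  have hlog : Tendsto (fun n : ℕ => Real.log n) atTop atTop :=
    Real.tendsto_log_atTop.comp tendsto_natCast_atTop_atTop
  have h1 : Tendsto (fun n : ℕ => Real.log n - c * lmin n) atTop atBot := by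
    apply tendsto_atBot_mono' atTop
      (f₁ := fun n : ℕ => -Real.log n)
    · filter_upwards [hgg.eventually_ge_atTop (2/c), hlog.eventually_gt_atTop 0]
        with n hr hl
      have h2 : 2 * Real.log n ≤ lmin n * c := (div_le_div_iff₀ hc hl).mp hr
      nlinarith
    · exact tendsto_neg_atBot_iff.mpr hlog
  have h2 : Tendsto (fun n : ℕ => Real.exp (Real.log n - c * lmin n)) atTop (nhds 0) :=
    Real.tendsto_exp_atBot.comp h1
  apply h2.congr'
  filter_upwards [eventually_ge_atTop 1] with n hn
  have hn' : (0:ℝ) < n := by exact_mod_cast Nat.lt_of_lt_of_le Nat.zero_lt_one hn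
  rw [Real.exp_sub, Real.exp_log hn', neg_mul, Real.exp_neg, div_eq_mul_inv]

/-- Singular PSD matrices with a single zero eigenvalue whose smallest nonzero
eigenvalue satisfies `λ_{n-1} ≫ log n` have Gibbs entropy `o(1)`. -/
theorem gibbs_entropy_little_o_one (τ : ℝ) (hτ : 0 < τ)
    (H : (n : ℕ) → Matrix (Fin n) (Fin n) ℂ)
    (hpsd : ∀ n, (H n).PosSemidef)
    (hker : ∀ n, 2 ≤ n → ∃! i, (hpsd n).isHermitian.eigenvalues i = 0)
    (lmin : ℕ → ℝ)
    (hlmin : ∀ n, 2 ≤ n →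
      IsLeast {x | x ∈ Set.range (hpsd n).isHermitian.eigenvalues ∧ x ≠ 0} (lmin n))
    (hgg : Tendsto (fun n : ℕ => lmin n / Real.log n) atTop atTop) :
    Tendsto (fun n : ℕ => gibbsEntropy τ (hpsd n).isHermitian.eigenvalues)
      atTop (nhds 0) := by
  classical
  set lam : (n : ℕ) → Fin n → ℝ := fun n => (hpsd n).isHermitian.eigenvalues with hlamdef
  set Z : ℕ → ℝ := fun n => ∑ i, Real.exp (-τ * lam n i) with hZdef
  set A : ℕ → ℝ := fun n => ∑ i, lam n i * Real.exp (-τ * lam n i) with hAdef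
  have hnonneg : ∀ n i, 0 ≤ lam n i := fun n i => (hpsd n).eigenvalues_nonneg i
  -- record eventual bounds
  have hbounds : ∀ n, 2 ≤ n →
      (1 ≤ Z n ∧ Z n ≤ 1 + (n : ℝ) * Real.exp (-τ * lmin n)) ∧
      (0 ≤ A n ∧ A n ≤ (1/τ) * ((n : ℝ) * Real.exp (-(τ/2) * lmin n))) := by
    intro n hn
    obtain ⟨i0, hi0, huniq⟩ := hker n hn
    have hi0' : lam n i0 = 0 := hi0
    have hge : ∀ i, i ≠ i0 → lmin n ≤ lam n i := by
      intro i hi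
      refine (hlmin n hn).2 ⟨⟨i, rfl⟩, ?_⟩
      exact fun h => hi (huniq i h)
    constructor
    · constructor
      · calc (1:ℝ) = Real.exp (-τ * lam n i0) := by rw [hi0']; simp
          _ ≤ Z n := Finset.single_le_sum (f := fun i => Real.exp (-τ * lam n i))
              (fun i _ => (Real.exp_pos _).le) (mem_univ i0)
      · have hsplit := Finset.add_sum_erase Finset.univ
          (fun i => Real.exp (-τ * lam n i)) (mem_univ i0)
        have h1 : ∑ i ∈ Finset.univ.erase i0, Real.exp (-τ * lam n i)
            ≤ (n : ℝ) * Real.exp (-τ * lmin n) := by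
          calc ∑ i ∈ Finset.univ.erase i0, Real.exp (-τ * lam n i)
              ≤ (Finset.univ.erase i0).card • Real.exp (-τ * lmin n) := by
                apply Finset.sum_le_card_nsmul
                intro i hi
                apply Real.exp_le_exp.mpr
                have := hge i (Finset.ne_of_mem_erase hi)
                nlinarith
            _ ≤ (n : ℝ) * Real.exp (-τ * lmin n) := by
                rw [nsmul_eq_mul]
                apply mul_le_mul_of_nonneg_right _ (Real.exp_pos _).le
                calc ((Finset.univ.erase i0).card : ℝ) ≤ (Finset.univ : Finset (Fin n)).card := by
                      exact_mod_cast Finset.card_le_card (Finset.erase_subset _ _)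
                  _ = n := by simp
        have h0 : Real.exp (-τ * lam n i0) = 1 := by rw [hi0']; simp
        calc Z n = Real.exp (-τ * lam n i0)
              + ∑ i ∈ Finset.univ.erase i0, Real.exp (-τ * lam n i) := hsplit.symm
          _ ≤ 1 + (n : ℝ) * Real.exp (-τ * lmin n) := by rw [h0]; linarith
    · constructor
      · exact Finset.sum_nonneg fun i _ =>
          mul_nonneg (hnonneg n i) (Real.exp_pos _).le
      · have hsplit := Finset.add_sum_erase Finset.univ
          (fun i => lam n i * Real.exp (-τ * lam n i)) (mem_univ i0)
        have h0 : lam n i0 * Real.exp (-τ * lam n i0) = 0 := by rw [hi0']; simp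
        have h1 : ∑ i ∈ Finset.univ.erase i0, lam n i * Real.exp (-τ * lam n i)
            ≤ (n : ℝ) * ((1/τ) * Real.exp (-(τ/2) * lmin n)) := by
          calc ∑ i ∈ Finset.univ.erase i0, lam n i * Real.exp (-τ * lam n i)
              ≤ (Finset.univ.erase i0).card • ((1/τ) * Real.exp (-(τ/2) * lmin n)) := by
                apply Finset.sum_le_card_nsmul
                intro i hi
                calc lam n i * Real.exp (-τ * lam n i)
                    ≤ (1/τ) * Real.exp (-(τ/2) * lam n i) := mul_exp_le' hτ (hnonneg n i)
                  _ ≤ (1/τ) * Real.exp (-(τ/2) * lmin n) := by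
                      apply mul_le_mul_of_nonneg_left _ (by positivity)
                      apply Real.exp_le_exp.mpr
                      have := hge i (Finset.ne_of_mem_erase hi)
                      nlinarith
            _ ≤ (n : ℝ) * ((1/τ) * Real.exp (-(τ/2) * lmin n)) := by
                rw [nsmul_eq_mul]
                apply mul_le_mul_of_nonneg_right _ (by positivity)
                calc ((Finset.univ.erase i0).card : ℝ) ≤ (Finset.univ : Finset (Fin n)).card := by
                      exact_mod_cast Finset.card_le_card (Finset.erase_subset _ _)
                  _ = n := by simp
        calc A n = lam n i0 * Real.exp (-τ * lam n i0)
              + ∑ i ∈ Finset.univ.erase i0, lam n i * Real.exp (-τ * lam n i) := hsplit.symm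
          _ ≤ (1/τ) * ((n : ℝ) * Real.exp (-(τ/2) * lmin n)) := by rw [h0]; linarith [h1]; 
  have hZlim : Tendsto Z atTop (nhds 1) := by
    apply tendsto_of_tendsto_of_tendsto_of_le_of_le'
      (g := fun _ : ℕ => (1:ℝ))
      (h := fun n : ℕ => 1 + (n : ℝ) * Real.exp (-τ * lmin n))
    · exact tendsto_const_nhds
    · have := (tendsto_n_mul_exp' hτ hgg).const_add 1
      simpa using this
    · filter_upwards [eventually_ge_atTop 2] with n hn using ((hbounds n hn).1).1
    · filter_upwards [eventually_ge_atTop 2] with n hn using ((hbounds n hn).1).2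
  have hAlim : Tendsto A atTop (nhds 0) := by
    apply tendsto_of_tendsto_of_tendsto_of_le_of_le'
      (g := fun _ : ℕ => (0:ℝ))
      (h := fun n : ℕ => (1/τ) * ((n : ℝ) * Real.exp (-(τ/2) * lmin n)))
    · exact tendsto_const_nhds
    · have := (tendsto_n_mul_exp' (half_pos hτ) hgg).const_mul (1/τ)
      simpa using this
    · filter_upwards [eventually_ge_atTop 2] with n hn using ((hbounds n hn).2).1
    · filter_upwards [eventually_ge_atTop 2] with n hn using ((hbounds n hn).2).2
  have hfin : Tendsto (fun n : ℕ => τ * A n / Z n + Real.log (Z n)) atTop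
      (nhds (τ * 0 / 1 + Real.log 1)) := by
    apply Tendsto.add
    · exact (hAlim.const_mul τ).div hZlim one_ne_zero
    · exact (Real.continuousAt_log one_ne_zero).tendsto.comp hZlim
  simp only [mul_zero, zero_div, Real.log_one, add_zero] at hfin
  exact hfin
end

section
/- Let (H_n) be a sequence of singular positive semidefinite n × n Hermitian matrices with exactly one zero eigenvalue, whose smallest nonzero eigenvalue is λ_{n-1} = a·log n and largest eigenvalue is λ_1 = b·log n for constants b ≥ a > 0. If τ > 1/a, then S(ρ_{H_n}^τ) → 0 as n → ∞. -/
open Real Finset Filter ComplexOrder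

lemma gibbs_bound (τ a b : ℝ) (hτ : 0 < τ) (hb : 0 ≤ b) {n : ℕ} (hn : 2 ≤ n)
    (lam : Fin n → ℝ) (hnn : ∀ i, 0 ≤ lam i)
    (hk : ∃! i, lam i = 0)
    (hmin : ∀ i, lam i ≠ 0 → a * Real.log n ≤ lam i)
    (hmax : ∀ i, lam i ≤ b * Real.log n) :
    0 ≤ gibbsEntropy τ lam ∧
    gibbsEntropy τ lam ≤
      τ * ((n : ℝ) * (b * Real.log n) * Real.exp (-τ * (a * Real.log n)))
        + (n : ℝ) * Real.exp (-τ * (a * Real.log n)) := by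
  obtain ⟨i0, hi0, huniq⟩ := hk
  set M : ℝ := Real.exp (-τ * (a * Real.log n)) with hM
  have hlogn : (0:ℝ) ≤ Real.log n := Real.log_nonneg (by exact_mod_cast hn.trans' (by norm_num))
  set Z : ℝ := ∑ i, Real.exp (-τ * lam i) with hZ
  set S1 : ℝ := ∑ i, lam i * Real.exp (-τ * lam i) with hS1
  have hS1nn : 0 ≤ S1 := Finset.sum_nonneg fun i _ =>
    mul_nonneg (hnn i) (Real.exp_pos _).le
  have hZ1 : 1 ≤ Z := by
    have : Real.exp (-τ * lam i0) = 1 := by rw [hi0]; simp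
    calc (1:ℝ) = Real.exp (-τ * lam i0) := this.symm
    _ ≤ Z := Finset.single_le_sum (f := fun i => Real.exp (-τ * lam i))
          (fun i _ => (Real.exp_pos _).le) (Finset.mem_univ i0)
  have hZpos : 0 < Z := lt_of_lt_of_le one_pos hZ1
  have hZub : Z ≤ 1 + (n : ℝ) * M := by
    have hsplit : Z = Real.exp (-τ * lam i0) + ∑ i ∈ Finset.univ.erase i0,
        Real.exp (-τ * lam i) := (Finset.add_sum_erase _ _ (Finset.mem_univ i0)).symm
    have h1 : Real.exp (-τ * lam i0) = 1 := by rw [hi0]; simp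
    have hrest : ∑ i ∈ Finset.univ.erase i0, Real.exp (-τ * lam i) ≤
        (Finset.univ.erase i0).card • M := by
      refine Finset.sum_le_card_nsmul _ _ _ fun i hi => ?_
      have hne : lam i ≠ 0 := fun h0 => (Finset.mem_erase.mp hi).1 (huniq i h0)
      exact Real.exp_le_exp.mpr (by nlinarith [hmin i hne])
    have hcard : ((Finset.univ.erase i0).card : ℝ) ≤ (n : ℝ) := by
      have := Finset.card_erase_le (s := (Finset.univ : Finset (Fin n))) (a := i0)
      simp only [Finset.card_univ, Fintype.card_fin] at this
      exact_mod_cast this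
    have hMpos : 0 < M := Real.exp_pos _
    rw [hsplit, h1]
    have : ((Finset.univ.erase i0).card : ℝ) * M ≤ (n : ℝ) * M :=
      mul_le_mul_of_nonneg_right hcard hMpos.le
    rw [nsmul_eq_mul] at hrest
    linarith
  have hS1ub : S1 ≤ (n : ℝ) * (b * Real.log n) * M := by
    have hterm : ∀ i ∈ (Finset.univ : Finset (Fin n)),
        lam i * Real.exp (-τ * lam i) ≤ (b * Real.log n) * M := by
      intro i _
      by_cases h0 : lam i = 0
      · rw [h0]; simp
        exact mul_nonneg (mul_nonneg hb hlogn) (Real.exp_pos _).le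
      · have h1 : lam i ≤ b * Real.log n := hmax i
        have h2 : Real.exp (-τ * lam i) ≤ M :=
          Real.exp_le_exp.mpr (by nlinarith [hmin i h0])
        exact mul_le_mul h1 h2 (Real.exp_pos _).le (mul_nonneg hb hlogn)
    calc S1 ≤ (Finset.univ : Finset (Fin n)).card • ((b * Real.log n) * M) :=
          Finset.sum_le_card_nsmul _ _ _ hterm
    _ = (n : ℝ) * (b * Real.log n) * M := by
          simp [nsmul_eq_mul, mul_assoc]
  have hlogZ0 : 0 ≤ Real.log Z := Real.log_nonneg hZ1
  have hlogZ : Real.log Z ≤ (n : ℝ) * M := by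
    have := Real.log_le_sub_one_of_pos hZpos
    linarith
  have hdivnn : 0 ≤ τ * S1 / Z := div_nonneg (mul_nonneg hτ.le hS1nn) hZpos.le
  have hdiv : τ * S1 / Z ≤ τ * S1 := div_le_self (mul_nonneg hτ.le hS1nn) hZ1
  constructor
  · exact add_nonneg hdivnn hlogZ0
  · have : τ * S1 ≤ τ * ((n : ℝ) * (b * Real.log n) * M) :=
      mul_le_mul_of_nonneg_left hS1ub hτ.le
    unfold gibbsEntropy
    rw [← hZ, ← hS1]
    linarith

lemma aux_tendsto1 (c : ℝ) (hc : 1 < c) :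
    Tendsto (fun x : ℝ => x * Real.exp (-(c * Real.log x))) atTop (nhds 0) := by
  have h := tendsto_rpow_neg_atTop (y := c - 1) (by linarith)
  refine h.congr' ?_
  filter_upwards [eventually_gt_atTop (0:ℝ)] with x hx
  calc x ^ (-(c - 1)) = Real.exp (Real.log x * -(c - 1)) := Real.rpow_def_of_pos hx _
    _ = Real.exp (Real.log x) * Real.exp (-(c * Real.log x)) := by
        rw [← Real.exp_add, show Real.log x + -(c * Real.log x) = Real.log x * -(c - 1) by ring]
    _ = x * Real.exp (-(c * Real.log x)) := by rw [Real.exp_log hx]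

lemma aux_tendsto2 (c : ℝ) (hc : 1 < c) :
    Tendsto (fun x : ℝ => x * Real.log x * Real.exp (-(c * Real.log x))) atTop (nhds 0) := by
  have h := (isLittleO_log_rpow_atTop (r := c - 1) (by linarith)).tendsto_div_nhds_zero
  refine h.congr' ?_
  filter_upwards [eventually_gt_atTop (0:ℝ)] with x hx
  calc Real.log x / x ^ (c - 1) = Real.log x * (x ^ (c - 1))⁻¹ := div_eq_mul_inv _ _
    _ = Real.log x * Real.exp (-(Real.log x * (c - 1))) := by
        rw [Real.rpow_def_of_pos hx, ← Real.exp_neg]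
    _ = Real.log x * (Real.exp (Real.log x) * Real.exp (-(c * Real.log x))) := by
        rw [← Real.exp_add,
          show Real.log x + -(c * Real.log x) = -(Real.log x * (c - 1)) by ring]
    _ = x * Real.log x * Real.exp (-(c * Real.log x)) := by rw [Real.exp_log hx]; ring

/-- Singular PSD matrices with one zero eigenvalue, smallest nonzero eigenvalue
`a·log n` and largest eigenvalue `b·log n` (`b ≥ a > 0`): if `τ > 1/a` then
`S(ρ_{H_n}^τ) → 0`. -/
theorem gibbs_entropy_vanishes_large_tau (τ a b : ℝ)
    (ha : 0 < a) (hab : a ≤ b) (hτa : 1 / a < τ)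
    (H : (n : ℕ) → Matrix (Fin n) (Fin n) ℂ)
    (hpsd : ∀ n, (H n).PosSemidef)
    (hker : ∀ n, 2 ≤ n → ∃! i, (hpsd n).isHermitian.eigenvalues i = 0)
    (hlmin : ∀ n, 2 ≤ n →
      IsLeast {x | x ∈ Set.range (hpsd n).isHermitian.eigenvalues ∧ x ≠ 0}
        (a * Real.log n))
    (hlmax : ∀ n, 2 ≤ n →
      IsGreatest (Set.range (hpsd n).isHermitian.eigenvalues) (b * Real.log n)) :
    Tendsto (fun n : ℕ => gibbsEntropy τ (hpsd n).isHermitian.eigenvalues)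
      atTop (nhds 0) := by
  have hτ : 0 < τ := lt_trans (by positivity) hτa
  have hca : 1 < τ * a := by
    rw [div_lt_iff₀ ha] at hτa; linarith
  have hb : (0:ℝ) ≤ b := le_trans ha.le hab
  -- upper bound function
  set g : ℕ → ℝ := fun n =>
    τ * ((n : ℝ) * (b * Real.log n) * Real.exp (-τ * (a * Real.log n)))
      + (n : ℝ) * Real.exp (-τ * (a * Real.log n)) with hg
  have hgt : Tendsto g atTop (nhds 0) := by
    have h1 : Tendsto (fun n : ℕ => (n : ℝ) * Real.exp (-(τ * a * Real.log n)))
        atTop (nhds 0) := (aux_tendsto1 (τ * a) hca).comp tendsto_natCast_atTop_atTop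
    have h2 : Tendsto (fun n : ℕ =>
        (n : ℝ) * Real.log n * Real.exp (-(τ * a * Real.log n))) atTop (nhds 0) :=
      (aux_tendsto2 (τ * a) hca).comp tendsto_natCast_atTop_atTop
    have : Tendsto (fun n : ℕ => τ * b * ((n : ℝ) * Real.log n *
        Real.exp (-(τ * a * Real.log n))) + (n : ℝ) * Real.exp (-(τ * a * Real.log n)))
        atTop (nhds 0) := by
      have := (h2.const_mul (τ * b)).add h1
      simpa using this
    refine this.congr fun n => ?_
    simp only [hg]
    ring_nf
  have hge0 : Tendsto (fun _ : ℕ => (0:ℝ)) atTop (nhds 0) := tendsto_const_nhds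
  refine tendsto_of_tendsto_of_tendsto_of_le_of_le' hge0 hgt ?_ ?_
  · filter_upwards [eventually_ge_atTop 2] with n hn
    have lam := (hpsd n).isHermitian.eigenvalues
    exact (gibbs_bound τ a b hτ hb hn _ (fun i => (hpsd n).eigenvalues_nonneg i)
      (hker n hn)
      (fun i hi => (hlmin n hn).2 ⟨⟨i, rfl⟩, hi⟩)
      (fun i => (hlmax n hn).2 ⟨i, rfl⟩)).1
  · filter_upwards [eventually_ge_atTop 2] with n hn
    exact (gibbs_bound τ a b hτ hb hn _ (fun i => (hpsd n).eigenvalues_nonneg i)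
      (hker n hn)
      (fun i hi => (hlmin n hn).2 ⟨⟨i, rfl⟩, hi⟩)
      (fun i => (hlmax n hn).2 ⟨i, rfl⟩)).2
end

section
/- Let 𝓛(K_n) be the normalized Laplacian of the complete graph on n vertices, with eigenvalues 0 (multiplicity 1) and n/(n−1) (multiplicity n−1), and fix τ > 0. Then log n − S(ρ_{𝓛(K_n)}^τ) → 0 as n → ∞, where S(ρ_{𝓛(K_n)}^τ) = τ·(n·e^{−τn/(n−1)})/(1 + (n−1)e^{−τn/(n−1)}) + log(1 + (n−1)e^{−τn/(n−1)}). -/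
open Real Filter

/-- For the normalized Laplacian of the complete graph `K_n` (eigenvalues `0`
once and `n/(n−1)` with multiplicity `n−1`), `log n − S(ρ^τ) → 0`. -/
theorem complete_graph_normalized_laplacian_entropy (τ : ℝ) (hτ : 0 < τ) :
    Tendsto (fun n : ℕ =>
        Real.log n -
          (τ * ((n : ℝ) * Real.exp (-τ * (n : ℝ) / ((n : ℝ) - 1))) /
              (1 + ((n : ℝ) - 1) * Real.exp (-τ * (n : ℝ) / ((n : ℝ) - 1))) +
            Real.log (1 + ((n : ℝ) - 1) * Real.exp (-τ * (n : ℝ) / ((n : ℝ) - 1)))))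
      atTop (nhds 0) := by
  set a : ℕ → ℝ := fun n => Real.exp (-τ * n / ((n:ℝ) - 1)) with ha_def
  set d : ℕ → ℝ := fun n => 1/(n:ℝ) + (1 - 1/(n:ℝ)) * a n with hd_def
  have hn1 : Tendsto (fun n : ℕ => ((n:ℝ) - 1)) atTop atTop :=
    tendsto_atTop_add_const_right _ _ tendsto_natCast_atTop_atTop
  have hinv : Tendsto (fun n : ℕ => ((n:ℝ) - 1)⁻¹) atTop (nhds 0) :=
    hn1.inv_tendsto_atTop
  have hratio : Tendsto (fun n : ℕ => (n:ℝ) / ((n:ℝ) - 1)) atTop (nhds 1) := by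
    have h : Tendsto (fun n : ℕ => 1 + ((n:ℝ)-1)⁻¹) atTop (nhds (1 + 0)) :=
      tendsto_const_nhds.add hinv
    rw [add_zero] at h
    refine h.congr' ?_
    filter_upwards [eventually_ge_atTop 2] with n hn
    have h2 : (2:ℝ) ≤ n := by exact_mod_cast hn
    have h1 : ((n:ℝ) - 1) ≠ 0 := by linarith
    field_simp; ring
  have ha : Tendsto a atTop (nhds (Real.exp (-τ))) := by
    have h1 : Tendsto (fun n : ℕ => -τ * (n:ℝ) / ((n:ℝ) - 1)) atTop (nhds (-τ)) := by
      have h := hratio.const_mul (-τ)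
      rw [mul_one] at h
      exact h.congr fun n => by ring
    exact (Real.continuous_exp.tendsto _).comp h1
  have h0 : Tendsto (fun n : ℕ => 1/(n:ℝ)) atTop (nhds 0) := by
    exact tendsto_one_div_atTop_nhds_zero_nat
  have hd : Tendsto d atTop (nhds (Real.exp (-τ))) := by
    have hc : Tendsto (fun n : ℕ => (1:ℝ) - 1/n) atTop (nhds (1 - 0)) :=
      tendsto_const_nhds.sub h0
    have h1 := h0.add (hc.mul ha)
    simpa [hd_def, one_div] using h1
  have hexp_pos : (0:ℝ) < Real.exp (-τ) := Real.exp_pos _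
  have hlogd : Tendsto (fun n => Real.log (d n)) atTop (nhds (-τ)) := by
    have := (Real.continuousAt_log hexp_pos.ne').tendsto.comp hd
    rw [Real.log_exp] at this; exact this
  have hg : Tendsto (fun n => a n / d n) atTop (nhds 1) := by
    have := ha.div hd hexp_pos.ne'
    rw [div_self hexp_pos.ne'] at this; exact this
  have hmain : Tendsto (fun n => -Real.log (d n) - τ * (a n / d n)) atTop (nhds 0) := by
    have := (hlogd.neg).sub (hg.const_mul τ)
    simpa using this
  refine hmain.congr' ?_
  filter_upwards [eventually_ge_atTop 2] with n hn
  have hn2 : (2:ℝ) ≤ n := by exact_mod_cast hn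
  have hnpos : (0:ℝ) < n := by linarith
  have hapos : 0 < a n := Real.exp_pos _
  have hdenpos : 0 < 1 + ((n:ℝ) - 1) * a n := by nlinarith
  have hdeq : 1 + ((n:ℝ) - 1) * a n = n * d n := by
    simp only [hd_def]; field_simp
  have hdpos : 0 < d n := by
    simp only [hd_def]
    have h1 : (0:ℝ) < 1/n := by positivity
    have h2 : 1/(n:ℝ) ≤ 1 := by rw [div_le_one hnpos]; linarith
    nlinarith
  show -Real.log (d n) - τ * (a n / d n) =
      Real.log n - (τ * ((n:ℝ) * a n) / (1 + ((n:ℝ) - 1) * a n) +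
        Real.log (1 + ((n:ℝ) - 1) * a n))
  rw [hdeq, Real.log_mul hnpos.ne' hdpos.ne']
  have : τ * ((n:ℝ) * a n) / ((n:ℝ) * d n) = τ * (a n / d n) := by
    field_simp
  rw [this]; ring
end

section
/- Let L(K_{m,1}) be the Laplacian of the star graph on m+1 vertices, with eigenvalues 0 (multiplicity 1), 1 (multiplicity m−1), and m+1 (multiplicity 1), and fix τ > 0. Then log(m+1) − S(ρ_{L(K_{m,1})}^τ) → 0 as m → ∞. -/
open Real Filter

/-- For the Laplacian of the star graph `K_{m,1}` on `m+1` vertices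
(eigenvalues `0` once, `1` with multiplicity `m−1`, and `m+1` once),
`log(m+1) − S(ρ^τ) → 0` as `m → ∞`. -/
theorem star_graph_laplacian_entropy (τ : ℝ) (hτ : 0 < τ) :
    Tendsto (fun m : ℕ =>
        Real.log ((m : ℝ) + 1) -
          (τ * (((m : ℝ) - 1) * 1 * Real.exp (-τ * 1) +
                ((m : ℝ) + 1) * Real.exp (-τ * ((m : ℝ) + 1))) /
              (1 + ((m : ℝ) - 1) * Real.exp (-τ * 1) +
                Real.exp (-τ * ((m : ℝ) + 1))) +
            Real.log (1 + ((m : ℝ) - 1) * Real.exp (-τ * 1) +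
              Real.exp (-τ * ((m : ℝ) + 1)))))
      atTop (nhds 0) := by
  set a : ℝ := Real.exp (-τ * 1) with ha_def
  have ha_pos : 0 < a := Real.exp_pos _
  set ε : ℕ → ℝ := fun m => Real.exp (-τ * ((m : ℝ) + 1)) with hε_def
  set D : ℕ → ℝ := fun m => 1 + ((m : ℝ) - 1) * a + ε m with hD_def
  set N : ℕ → ℝ := fun m => ((m : ℝ) - 1) * 1 * a + ((m : ℝ) + 1) * ε m with hN_def
  have hε : Tendsto ε atTop (nhds 0) := by
    have h1 : Tendsto (fun m : ℕ => τ * ((m : ℝ) + 1)) atTop atTop := by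
      apply Tendsto.const_mul_atTop hτ
      exact tendsto_atTop_add_const_right _ _ tendsto_natCast_atTop_atTop
    have h2 : Tendsto (fun m : ℕ => -τ * ((m : ℝ) + 1)) atTop atBot := by
      have he : (fun m : ℕ => -τ * ((m : ℝ) + 1)) = fun m : ℕ => -(τ * ((m : ℝ) + 1)) := by
        funext m; ring
      rw [he]; exact tendsto_neg_atTop_atBot.comp h1
    exact Real.tendsto_exp_atBot.comp h2
  have h1m : Tendsto (fun m : ℕ => 1 / (m : ℝ)) atTop (nhds 0) :=
    tendsto_one_div_atTop_nhds_zero_nat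
  have hDpos : ∀ m : ℕ, 1 ≤ m → 0 < D m := by
    intro m hm
    have h1 : (0 : ℝ) ≤ (m : ℝ) - 1 := by
      have : (1 : ℝ) ≤ (m : ℝ) := by exact_mod_cast hm
      linarith
    have h2 : 0 < ε m := Real.exp_pos _
    have h3 : 0 ≤ ((m : ℝ) - 1) * a := mul_nonneg h1 ha_pos.le
    simp only [hD_def]; linarith
  -- D m / m → a
  have hDm : Tendsto (fun m : ℕ => D m / (m : ℝ)) atTop (nhds a) := by
    have key : Tendsto (fun m : ℕ => 1 / (m : ℝ) + (1 - 1 / (m : ℝ)) * a + ε m * (1 / (m : ℝ)))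
        atTop (nhds (0 + (1 - 0) * a + 0 * 0)) :=
      (h1m.add ((tendsto_const_nhds.sub h1m).mul tendsto_const_nhds)).add (hε.mul h1m)
    have key' : Tendsto (fun m : ℕ => 1 / (m : ℝ) + (1 - 1 / (m : ℝ)) * a + ε m * (1 / (m : ℝ)))
        atTop (nhds a) := by convert key using 2; ring
    refine key'.congr' ?_
    filter_upwards [eventually_ge_atTop 1] with m hm
    have hm0 : (m : ℝ) ≠ 0 := by exact Nat.cast_ne_zero.2 (by omega)
    simp only [hD_def]
    field_simp
  -- N m / m → a
  have hNm : Tendsto (fun m : ℕ => N m / (m : ℝ)) atTop (nhds a) := by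
    have key : Tendsto (fun m : ℕ => (1 - 1 / (m : ℝ)) * a + (1 + 1 / (m : ℝ)) * ε m)
        atTop (nhds ((1 - 0) * a + (1 + 0) * 0)) :=
      ((tendsto_const_nhds.sub h1m).mul tendsto_const_nhds).add
        ((tendsto_const_nhds.add h1m).mul hε)
    have key' : Tendsto (fun m : ℕ => (1 - 1 / (m : ℝ)) * a + (1 + 1 / (m : ℝ)) * ε m)
        atTop (nhds a) := by convert key using 2; ring
    refine key'.congr' ?_
    filter_upwards [eventually_ge_atTop 1] with m hm
    have hm0 : (m : ℝ) ≠ 0 := by exact Nat.cast_ne_zero.2 (by omega)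
    simp only [hN_def]
    field_simp
  -- (m+1)/D m → 1/a
  have hg : Tendsto (fun m : ℕ => ((m : ℝ) + 1) / D m) atTop (nhds (1 / a)) := by
    have hnum : Tendsto (fun m : ℕ => ((m : ℝ) + 1) / (m : ℝ)) atTop (nhds 1) := by
      have key : Tendsto (fun m : ℕ => 1 + 1 / (m : ℝ)) atTop (nhds (1 + 0)) :=
        tendsto_const_nhds.add h1m
      have key' : Tendsto (fun m : ℕ => 1 + 1 / (m : ℝ)) atTop (nhds 1) := by
        simpa using key
      refine key'.congr' ?_
      filter_upwards [eventually_ge_atTop 1] with m hm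
      have hm0 : (m : ℝ) ≠ 0 := by exact Nat.cast_ne_zero.2 (by omega)
      field_simp
    have := hnum.div hDm ha_pos.ne'
    refine this.congr' ?_
    filter_upwards [eventually_ge_atTop 1] with m hm
    have hm0 : (m : ℝ) ≠ 0 := by exact Nat.cast_ne_zero.2 (by omega)
    simp only [Pi.div_apply]
    have hD0 := (hDpos m hm).ne'
    field_simp
  -- N/D → 1
  have hh : Tendsto (fun m : ℕ => N m / D m) atTop (nhds 1) := by
    have := hNm.div hDm ha_pos.ne'
    rw [div_self ha_pos.ne'] at this
    refine this.congr' ?_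
    filter_upwards [eventually_ge_atTop 1] with m hm
    have hm0 : (m : ℝ) ≠ 0 := by exact Nat.cast_ne_zero.2 (by omega)
    simp only [Pi.div_apply]
    have hD0 := (hDpos m hm).ne'
    field_simp
  have hlog : Tendsto (fun m : ℕ => Real.log (((m : ℝ) + 1) / D m)) atTop
      (nhds (Real.log (1 / a))) := hg.log (by positivity)
  have hfinal := hlog.sub (hh.const_mul τ)
  have hval : Real.log (1 / a) - τ * 1 = 0 := by
    rw [one_div, Real.log_inv, ha_def, Real.log_exp]; ring
  rw [hval] at hfinal
  refine hfinal.congr' ?_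
  filter_upwards [eventually_ge_atTop 1] with m hm
  have hD := hDpos m hm
  have hm1 : (0 : ℝ) < (m : ℝ) + 1 := by positivity
  rw [Real.log_div hm1.ne' hD.ne']
  ring
end

section
/- Fix τ > 0 and for each n ≥ 1 consider the eigenvalues λ_j = 2cos(2πj/n), j = 0, …, n−1, of the adjacency matrix of the cycle C_n. Then as n → ∞, (1/n)·Σ_{j=0}^{n−1} exp(−2τ·cos(2πj/n)) → ∫₀¹ exp(−2τ·cos(2πx)) dx = I₀(2τ), and (1/n)·Σ_{j=0}^{n−1} cos(2πj/n)·exp(−2τ·cos(2πj/n)) → −I₁(2τ), where I₀, I₁ are modified Bessel functions of the first kind. Consequently S(ρ_{−A(C_n)}^τ) − log n → −2τ·I₁(2τ)/I₀(2τ) + log I₀(2τ). -/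
open Real Filter Finset

/-- Modified Bessel function of the first kind `I₀`, via
`I₀(z) = ∫₀¹ e^{−z·cos(2πx)} dx`. -/
noncomputable def besselI0 (z : ℝ) : ℝ :=
  ∫ x in (0:ℝ)..1, Real.exp (-z * Real.cos (2 * Real.pi * x))

/-- Modified Bessel function of the first kind `I₁`, via
`I₁(z) = −∫₀¹ cos(2πx)·e^{−z·cos(2πx)} dx`. -/
noncomputable def besselI1 (z : ℝ) : ℝ :=
  -∫ x in (0:ℝ)..1, Real.cos (2 * Real.pi * x) * Real.exp (-z * Real.cos (2 * Real.pi * x))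

lemma tendsto_riemann_sum (f : ℝ → ℝ) (hf : Continuous f) :
    Tendsto (fun n : ℕ => (1 / (n : ℝ)) * ∑ j ∈ Finset.range n, f (j / n)) atTop
      (nhds (∫ x in (0:ℝ)..1, f x)) := by
  rw [Metric.tendsto_atTop]
  intro ε hε
  have hcpt : IsCompact (Set.Icc (0:ℝ) 1) := isCompact_Icc
  have huc : UniformContinuousOn f (Set.Icc 0 1) :=
    hcpt.uniformContinuousOn_of_continuous hf.continuousOn
  rw [Metric.uniformContinuousOn_iff] at huc
  obtain ⟨δ, hδ, hδ'⟩ := huc (ε / 2) (by positivity)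
  obtain ⟨N, hN⟩ := exists_nat_gt (1 / δ)
  refine ⟨N + 1, fun n hn => ?_⟩
  have hn1 : 1 ≤ n := le_trans (Nat.le_add_left 1 N) hn
  have hnpos : (0:ℝ) < n := by exact_mod_cast hn1
  have hinv : (1:ℝ) / n < δ := by
    have hNn : (N:ℝ) ≤ n := by exact_mod_cast le_trans (Nat.le_succ N) hn
    rw [div_lt_iff₀ hnpos]
    rw [div_lt_iff₀ hδ] at hN
    nlinarith
  -- split the integral
  have hint : ∀ a b : ℝ, IntervalIntegrable f MeasureTheory.volume a b :=
    fun a b => hf.intervalIntegrable a b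
  have hsplit : ∫ x in (0:ℝ)..1, f x
      = ∑ j ∈ Finset.range n, ∫ x in ((j:ℝ)/n)..((j+1:ℕ)/n : ℝ), f x := by
    rw [intervalIntegral.sum_integral_adjacent_intervals (fun k _ => hint _ _)]
    norm_num
    rw [div_self hnpos.ne']
  have hconst : ∀ j ∈ Finset.range n,
      (1 / (n:ℝ)) * f (j / n) = ∫ _ in ((j:ℝ)/n)..((j+1:ℕ)/n : ℝ), f (j / n) := by
    intro j _
    rw [intervalIntegral.integral_const, smul_eq_mul]
    congr 1
    push_cast
    field_simp
    ring
  rw [Finset.mul_sum, Finset.sum_congr rfl hconst, hsplit, dist_eq_norm, ← Finset.sum_sub_distrib]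
  have hbound : ∀ j ∈ Finset.range n,
      ‖(∫ _ in ((j:ℝ)/n)..((j+1:ℕ)/n : ℝ), f (j/n)) - ∫ x in ((j:ℝ)/n)..((j+1:ℕ)/n : ℝ), f x‖
        ≤ ε / 2 * (1 / n) := by
    intro j hj
    rw [Finset.mem_range] at hj
    rw [← intervalIntegral.integral_sub (intervalIntegrable_const) (hint _ _)]
    have h1 : ((j:ℝ)/n) ≤ ((j+1:ℕ)/n : ℝ) := by
      gcongr
      exact_mod_cast Nat.le_succ j
    have := intervalIntegral.norm_integral_le_of_norm_le_const
      (C := ε / 2) (a := ((j:ℝ)/n)) (b := ((j+1:ℕ)/n : ℝ)) (f := fun x => f (j/n) - f x) ?_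
    · refine le_trans this (le_of_eq ?_)
      congr 1
      rw [abs_of_nonneg (by linarith)]
      push_cast
      field_simp
      ring
    · intro x hx
      rw [Set.uIoc_of_le h1] at hx
      have hx1 : (j:ℝ)/n ≤ x := hx.1.le
      have hx2 : x ≤ ((j+1:ℕ)/n : ℝ) := hx.2
      have hmemx : x ∈ Set.Icc (0:ℝ) 1 := by
        constructor
        · exact le_trans (by positivity) hx1
        · refine le_trans hx2 ?_
          rw [div_le_one hnpos]
          exact_mod_cast hj
      have hmemj : (j:ℝ)/n ∈ Set.Icc (0:ℝ) 1 := by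
        constructor
        · positivity
        · rw [div_le_one hnpos]
          exact_mod_cast hj.le
      have hdist : dist ((j:ℝ)/n) x < δ := by
        rw [Real.dist_eq, abs_of_nonpos (by linarith)]
        have : x - (j:ℝ)/n ≤ 1/n := by
          have : ((j+1:ℕ):ℝ)/n - (j:ℝ)/n = 1/n := by push_cast; ring
          linarith
        linarith
      have := hδ' _ hmemj _ hmemx hdist
      rw [Real.dist_eq] at this
      simpa [Real.norm_eq_abs] using this.le
  calc ‖∑ j ∈ Finset.range n,
        ((∫ _ in ((j:ℝ)/n)..((j+1:ℕ)/n : ℝ), f (j/n)) - ∫ x in ((j:ℝ)/n)..((j+1:ℕ)/n : ℝ), f x)‖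
      ≤ ∑ j ∈ Finset.range n, ε / 2 * (1 / n) :=
        le_trans (norm_sum_le _ _) (Finset.sum_le_sum hbound)
    _ = ε / 2 := by
        rw [Finset.sum_const, Finset.card_range, nsmul_eq_mul]
        field_simp
    _ < ε := by linarith

lemma besselI0_pos {z : ℝ} : 0 < besselI0 z := by
  unfold besselI0
  apply intervalIntegral.intervalIntegral_pos_of_pos_on
  · exact (Real.continuous_exp.comp (by continuity)).intervalIntegrable 0 1
  · intro x _
    exact Real.exp_pos _
  · norm_num

/-- For the cycle `C_n`, whose adjacency matrix has eigenvalues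
`2cos(2πj/n)`, the Riemann sums of the Gibbs weights converge to the Bessel
integrals, and consequently
`S(ρ_{−A(C_n)}^τ) − log n → −2τ·I₁(2τ)/I₀(2τ) + log I₀(2τ)`. -/
theorem cycle_graph_entropy (τ : ℝ) (hτ : 0 < τ) :
    Tendsto (fun n : ℕ => (1 / (n : ℝ)) *
        ∑ j ∈ Finset.range n, Real.exp (-2 * τ * Real.cos (2 * Real.pi * j / n)))
      atTop (nhds (besselI0 (2 * τ))) ∧
    Tendsto (fun n : ℕ => (1 / (n : ℝ)) *
        ∑ j ∈ Finset.range n, Real.cos (2 * Real.pi * j / n) *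
          Real.exp (-2 * τ * Real.cos (2 * Real.pi * j / n)))
      atTop (nhds (-besselI1 (2 * τ))) ∧
    Tendsto (fun n : ℕ =>
        (2 * τ * (∑ j ∈ Finset.range n, Real.cos (2 * Real.pi * j / n) *
              Real.exp (-2 * τ * Real.cos (2 * Real.pi * j / n))) /
            (∑ j ∈ Finset.range n, Real.exp (-2 * τ * Real.cos (2 * Real.pi * j / n))) +
          Real.log (∑ j ∈ Finset.range n,
            Real.exp (-2 * τ * Real.cos (2 * Real.pi * j / n)))) - Real.log n)
      atTop
      (nhds (-(2 * τ) * besselI1 (2 * τ) / besselI0 (2 * τ) +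
        Real.log (besselI0 (2 * τ)))) := by
  have e0 : besselI0 (2 * τ) =
      ∫ x in (0:ℝ)..1, Real.exp (-2 * τ * Real.cos (2 * Real.pi * x)) := by
    unfold besselI0; simp only [neg_mul]
  have e1 : -besselI1 (2 * τ) =
      ∫ x in (0:ℝ)..1, Real.cos (2 * Real.pi * x) *
        Real.exp (-2 * τ * Real.cos (2 * Real.pi * x)) := by
    unfold besselI1; rw [neg_neg]; simp only [neg_mul]
  have h1 : Tendsto (fun n : ℕ => (1 / (n : ℝ)) *
      ∑ j ∈ Finset.range n, Real.exp (-2 * τ * Real.cos (2 * Real.pi * j / n)))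
      atTop (nhds (besselI0 (2 * τ))) := by
    rw [e0]
    have key := tendsto_riemann_sum
      (fun x => Real.exp (-2 * τ * Real.cos (2 * Real.pi * x))) (by fun_prop)
    refine key.congr fun n => ?_
    simp only [mul_div_assoc]
  have h2 : Tendsto (fun n : ℕ => (1 / (n : ℝ)) *
      ∑ j ∈ Finset.range n, Real.cos (2 * Real.pi * j / n) *
        Real.exp (-2 * τ * Real.cos (2 * Real.pi * j / n)))
      atTop (nhds (-besselI1 (2 * τ))) := by
    rw [e1]
    have key := tendsto_riemann_sum
      (fun x => Real.cos (2 * Real.pi * x) *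
        Real.exp (-2 * τ * Real.cos (2 * Real.pi * x))) (by fun_prop)
    refine key.congr fun n => ?_
    simp only [mul_div_assoc]
  refine ⟨h1, h2, ?_⟩
  have hI0pos : 0 < besselI0 (2 * τ) := besselI0_pos
  have hdiv := (tendsto_const_nhds (x := 2 * τ) (f := atTop (α := ℕ))).mul h2 |>.div h1 hI0pos.ne'
  have hlog := (Real.continuousAt_log hI0pos.ne').tendsto.comp h1
  have hmain := hdiv.add hlog
  have htarget : 2 * τ * -besselI1 (2 * τ) / besselI0 (2 * τ) + Real.log (besselI0 (2 * τ))
      = -(2 * τ) * besselI1 (2 * τ) / besselI0 (2 * τ) + Real.log (besselI0 (2 * τ)) := by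
    ring
  rw [htarget] at hmain
  refine hmain.congr' ?_
  filter_upwards [eventually_ge_atTop 1] with n hn
  have hnpos : (0:ℝ) < n := by exact_mod_cast hn
  have hApos : 0 < ∑ j ∈ Finset.range n, Real.exp (-2 * τ * Real.cos (2 * Real.pi * j / n)) := by
    apply Finset.sum_pos (fun j _ => Real.exp_pos _)
    exact Finset.nonempty_range_iff.mpr (by omega)
  simp only [Pi.div_apply, Function.comp_apply]
  set A := ∑ j ∈ Finset.range n, Real.exp (-2 * τ * Real.cos (2 * Real.pi * j / n))
  set B := ∑ j ∈ Finset.range n, Real.cos (2 * Real.pi * j / n) *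
    Real.exp (-2 * τ * Real.cos (2 * Real.pi * j / n))
  have hAn : (1 / (n:ℝ)) * A = A / n := by ring
  have hBA : 2 * τ * ((1 / (n:ℝ)) * B) / ((1 / (n:ℝ)) * A) = 2 * τ * B / A := by
    field_simp
  rw [hBA, hAn, Real.log_div hApos.ne' hnpos.ne']
  ring
end

section
/- Let A(K_{n,n}) be the adjacency matrix of the complete bipartite graph with both parts of size n; its spectrum consists of 2n−2 zero eigenvalues and the pair ±n. Fix τ > 0. Then the Gibbs entropy S(ρ_{−A(K_{n,n})}^τ) → 0 as n → ∞. -/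
open Real Filter

private lemma pow_mul_exp_key (c : ℝ) (hc : 0 < c) (k : ℕ) :
    Tendsto (fun x : ℝ => x ^ k * Real.exp (-(c * x))) atTop (nhds 0) := by
  have h := Real.tendsto_pow_mul_exp_neg_atTop_nhds_zero k
  have hmul : Tendsto (fun x : ℝ => c * x) atTop atTop :=
    Tendsto.const_mul_atTop hc tendsto_id
  have h2 : Tendsto (fun x : ℝ => (c * x) ^ k * Real.exp (-(c * x))) atTop (nhds 0) :=
    h.comp hmul
  have h3 := h2.const_mul ((c ^ k)⁻¹)
  rw [mul_zero] at h3
  refine h3.congr fun x => ?_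
  have hck : c ^ k ≠ 0 := pow_ne_zero _ hc.ne'
  field_simp [mul_pow]
  ring

/-- For the complete bipartite graph `K_{n,n}`, the matrix `−A(K_{n,n})` has
eigenvalues `−n`, `n` (each once) and `0` with multiplicity `2n−2`; its
Gibbs entropy `S(ρ_{−A(K_{n,n})}^τ) = τ·(Σλe^{−τλ})/Z + log Z` tends to `0`. -/
theorem complete_bipartite_adjacency_entropy_vanishes (τ : ℝ) (hτ : 0 < τ) :
    Tendsto (fun n : ℕ =>
        τ * ((-(n : ℝ)) * Real.exp (τ * (n : ℝ)) + (n : ℝ) * Real.exp (-τ * (n : ℝ))) /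
            (Real.exp (τ * (n : ℝ)) + Real.exp (-τ * (n : ℝ)) + (2 * (n : ℝ) - 2)) +
          Real.log (Real.exp (τ * (n : ℝ)) + Real.exp (-τ * (n : ℝ)) + (2 * (n : ℝ) - 2)))
      atTop (nhds 0) := by
  set U : ℝ → ℝ := fun x => Real.exp (-(2 * τ * x)) + (2 * x - 2) * Real.exp (-(τ * x)) with hUdef
  -- U tends to 0
  have hU0 : Tendsto U atTop (nhds 0) := by
    have h1 : Tendsto (fun x : ℝ => Real.exp (-(2 * τ * x))) atTop (nhds 0) := by
      have := pow_mul_exp_key (2 * τ) (by linarith) 0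
      simpa [mul_assoc] using this
    have h2 : Tendsto (fun x : ℝ => (2 * x - 2) * Real.exp (-(τ * x))) atTop (nhds 0) := by
      have ha := (pow_mul_exp_key τ hτ 1).const_mul 2
      have hb := (pow_mul_exp_key τ hτ 0).const_mul 2
      have := ha.sub hb
      simp only [mul_zero, sub_zero] at this ⊢
      refine this.congr fun x => ?_
      simp [pow_one]; ring
    simpa using h1.add h2
  -- τ x (U x + exp(-2τx)) tends to 0
  have hN : Tendsto (fun x : ℝ => τ * x * (U x + Real.exp (-(2 * τ * x)))) atTop (nhds 0) := by
    have ha := (pow_mul_exp_key (2 * τ) (by linarith) 1).const_mul (2 * τ)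
    have hb := (pow_mul_exp_key τ hτ 2).const_mul (2 * τ)
    have hc := (pow_mul_exp_key τ hτ 1).const_mul (2 * τ)
    have := (ha.add hb).sub hc
    simp only [mul_zero, add_zero, sub_zero] at this ⊢
    refine this.congr fun x => ?_
    simp only [hUdef, pow_one, pow_two]
    ring
  -- limit of the rewritten function
  have hden : Tendsto (fun x : ℝ => 1 + U x) atTop (nhds 1) := by
    simpa using (tendsto_const_nhds (x := (1 : ℝ)) (f := atTop)).add hU0
  have hlog : Tendsto (fun x : ℝ => Real.log (1 + U x)) atTop (nhds 0) := by
    have := (Real.continuousAt_log (x := 1) one_ne_zero).tendsto.comp hden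
    simpa [Function.comp_def] using this
  have hG : Tendsto (fun x : ℝ =>
      τ * x * (U x + Real.exp (-(2 * τ * x))) / (1 + U x) + Real.log (1 + U x))
      atTop (nhds 0) := by
    have hdiv := hN.div hden one_ne_zero
    simpa using hdiv.add hlog
  -- eventual equality with the original expression, for x ≥ 1
  have heq : ∀ x : ℝ, 1 ≤ x →
      τ * x * (U x + Real.exp (-(2 * τ * x))) / (1 + U x) + Real.log (1 + U x) =
      τ * ((-x) * Real.exp (τ * x) + x * Real.exp (-τ * x)) /
          (Real.exp (τ * x) + Real.exp (-τ * x) + (2 * x - 2)) +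
        Real.log (Real.exp (τ * x) + Real.exp (-τ * x) + (2 * x - 2)) := by
    intro x hx
    have hUpos : 0 < U x := by
      have h1 := Real.exp_pos (-(2 * τ * x))
      have h2 := Real.exp_pos (-(τ * x))
      have : 0 ≤ (2 * x - 2) * Real.exp (-(τ * x)) :=
        mul_nonneg (by linarith) h2.le
      simp only [hUdef]; linarith
    have h1U : (0:ℝ) < 1 + U x := by linarith
    have hkey : Real.exp (τ * x) * Real.exp (-(2 * τ * x)) = Real.exp (-(τ * x)) := by
      rw [← Real.exp_add]; congr 1; ring
    have hkey2 : Real.exp (τ * x) * Real.exp (-(τ * x)) = 1 := by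
      rw [← Real.exp_add]; simp
    have hD : Real.exp (τ * x) + Real.exp (-τ * x) + (2 * x - 2)
        = Real.exp (τ * x) * (1 + U x) := by
      simp only [hUdef, neg_mul]
      linear_combination -hkey - (2 * x - 2) * hkey2
    have hnum : τ * ((-x) * Real.exp (τ * x) + x * Real.exp (-τ * x))
        = Real.exp (τ * x) * (τ * x * (U x + Real.exp (-(2 * τ * x))) - τ * x * (1 + U x)) := by
      simp only [hUdef, neg_mul]
      linear_combination (-(τ * x)) * hkey
    rw [hD, hnum, Real.log_mul (Real.exp_ne_zero _) h1U.ne', Real.log_exp,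
      mul_div_mul_left _ _ (Real.exp_ne_zero _)]
    field_simp
    ring
  have hG' : Tendsto (fun x : ℝ =>
      τ * ((-x) * Real.exp (τ * x) + x * Real.exp (-τ * x)) /
          (Real.exp (τ * x) + Real.exp (-τ * x) + (2 * x - 2)) +
        Real.log (Real.exp (τ * x) + Real.exp (-τ * x) + (2 * x - 2)))
      atTop (nhds 0) := by
    refine hG.congr' ?_
    filter_upwards [eventually_ge_atTop (1:ℝ)] with x hx using heq x hx
  exact hG'.comp tendsto_natCast_atTop_atTop
end
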